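/- Let A be the 3×3 real matrix with rows (1, 1, 1/2), (1, 1/2, 1), (1/2, 1, 1). Then there is no nonzero vector v ∈ ℤ³ with ‖Av‖ = ‖v‖. -/

import Mathlib

lemma even_of_q (x y z : ℤ) (h : 5*(x^2+y^2+z^2)+16*(x*y+y*z+z*x) = 0) :
    2 ∣ x ∧ 2 ∣ y ∧ 2 ∣ z := by
  have key : ∀ a b c : ZMod 4, 5*(a^2+b^2+c^2)+16*(a*b+b*c+c*a) = 0 →
      2*a = 0 ∧ 2*b = 0 ∧ 2*c = 0 := by decide
  have h4 : ((5*(x^2+y^2+z^2)+16*(x*y+y*z+z*x) : ℤ) : ZMod 4) = 0 := by rw [h]; simp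
  push_cast at h4
  obtain ⟨ha, hb, hc⟩ := key x y z h4
  refine ⟨?_, ?_, ?_⟩ <;>
  · first
    | (have : ((2*x : ℤ) : ZMod 4) = 0 := by push_cast; exact ha
       have := (ZMod.intCast_zmod_eq_zero_iff_dvd _ _).1 this; omega)
    | (have : ((2*y : ℤ) : ZMod 4) = 0 := by push_cast; exact hb
       have := (ZMod.intCast_zmod_eq_zero_iff_dvd _ _).1 this; omega)
    | (have : ((2*z : ℤ) : ZMod 4) = 0 := by push_cast; exact hc
       have := (ZMod.intCast_zmod_eq_zero_iff_dvd _ _).1 this; omega)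

lemma descent : ∀ n : ℕ, ∀ x y z : ℤ, x.natAbs + y.natAbs + z.natAbs ≤ n →
    5*(x^2+y^2+z^2)+16*(x*y+y*z+z*x) = 0 → x = 0 ∧ y = 0 ∧ z = 0 := by
  intro n
  induction n using Nat.strong_induction_on with
  | _ n ih =>
    intro x y z hsum h
    rcases eq_or_ne (x.natAbs + y.natAbs + z.natAbs) 0 with h0 | h0
    · omega
    · obtain ⟨⟨x', rfl⟩, ⟨y', rfl⟩, ⟨z', rfl⟩⟩ := even_of_q x y z h
      have h' : 5*(x'^2+y'^2+z'^2)+16*(x'*y'+y'*z'+z'*x') = 0 := by linarith [h]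
      have := ih (x'.natAbs + y'.natAbs + z'.natAbs) (by omega) x' y' z' le_rfl h'
      omega

theorem stmt_10 :
    ¬∃ v : Fin 3 → ℤ, v ≠ 0 ∧
      ‖Matrix.toEuclideanLin !![(1 : ℝ), 1, 1/2; 1, 1/2, 1; 1/2, 1, 1]
          ((WithLp.equiv 2 (Fin 3 → ℝ)).symm (fun i => (v i : ℝ)))‖ =
        ‖(WithLp.equiv 2 (Fin 3 → ℝ)).symm (fun i => (v i : ℝ))‖ := by
  rintro ⟨v, hv, h⟩
  rw [Matrix.toEuclideanLin_apply] at h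
  rw [EuclideanSpace.norm_eq, EuclideanSpace.norm_eq] at h
  norm_num [WithLp.equiv_symm_apply, PiLp.toLp_apply, WithLp.ofLp_toLp, Fin.sum_univ_three,
    Matrix.mulVec, dotProduct, Real.norm_eq_abs, sq_abs, Matrix.cons_val_two, Matrix.vecHead,
    Matrix.vecTail] at h
  rw [Real.sqrt_inj (by positivity) (by positivity)] at h
  have hr : (5*((v 0:ℝ)^2+(v 1)^2+(v 2)^2)+16*((v 0:ℝ)*(v 1)+(v 1)*(v 2)+(v 2)*(v 0))) = 0 := by
    nlinarith [h]
  have hq : 5*((v 0)^2+(v 1)^2+(v 2)^2)+16*((v 0)*(v 1)+(v 1)*(v 2)+(v 2)*(v 0)) = 0 := by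
    exact_mod_cast hr
  obtain ⟨h0, h1, h2⟩ := descent _ (v 0) (v 1) (v 2) le_rfl hq
  apply hv
  funext i
  fin_cases i <;> simpa
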